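/- arXiv:2605.23104 — 2 statements merged into one kernel-verified Lean document; each statement's English description precedes it below -/
import Mathlib

section
/- Let n ≥ 10 and k ≤ 0.1n. Let P' ∈ {−1,0,1}ⁿ be a vector with exactly k coordinates equal to −1. Define 𝒜_{P'} = {P ∈ {0,1}ⁿ : |{i : Pᵢ = P'ᵢ ∈ {0,1}}| > 0.9n or |{i : Pᵢ = 1 − P'ᵢ, P'ᵢ ∈ {0,1}}| > 0.9n}. Then |𝒜_{P'}| ≤ 2^{k + 1 + log n + (0.1n − k)·log((n−k)e/(0.1n−k))} ≤ 2^{0.477n}. -/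
open Finset

def sc (t : ℕ) : ℕ → ℕ
  | 0 => 1
  | m+1 => Nat.descFactorial t (m+1) / Nat.factorial (m+1) + sc t m

lemma sc_eq (t : ℕ) : ∀ m, sc t m = ∑ j ∈ Finset.range (m+1), t.choose j := by
  intro m
  induction m with
  | zero => simp [sc]
  | succ m ih =>
      rw [Finset.sum_range_succ, ← ih, sc, Nat.choose_eq_descFactorial_div_factorial,
        Nat.add_comm]

lemma small_check : ∀ n < 91, ∀ k < 10, 10 ≤ n → 10*k ≤ n →
    2^(k+1) * sc (n-k) ((n - 10*k - 1)/10) ≤ 2^(477*n/1000) := by decide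

lemma num1 : (10:ℕ)^2000 ≤ 2^6644 := by decide +kernel
lemma num2 : (10:ℕ)^2000 ≤ 9^2000 * 2^305 := by decide +kernel


open Classical in
lemma count_one (n k : ℕ) (hk : 10 * k ≤ n) (P' : Fin n → Option Bool)
    (hkcard : (Finset.univ.filter (fun i => P' i = none)).card = k)
    (f : Bool → Bool) (hf : Function.Involutive f) :
    (Finset.univ.filter (fun P : Fin n → Bool =>
        0.9 * (n : ℝ) < ((Finset.univ.filter (fun i => P' i = some (f (P i)))).card : ℝ))).card
      ≤ 2 ^ k * ((Finset.univ.filter (fun i : Fin n => P' i ≠ none)).powerset.filter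
          (fun s => 10 * (s.card + k) < n)).card := by
  classical
  set S : Finset (Fin n) := Finset.univ.filter (fun i => P' i = none) with hS
  set T : Finset (Fin n) := Finset.univ.filter (fun i : Fin n => P' i ≠ none) with hT
  have hTcard : T.card = n - k := by
    have := Finset.card_filter_add_card_filter_not (s := (Finset.univ : Finset (Fin n)))
      (p := fun i => P' i = none)
    simp only [Finset.card_univ, Fintype.card_fin] at this
    have : S.card + T.card = n := by
      simpa [hS, hT] using this
    omega
  -- the injection
  set F : (Fin n → Bool) → Finset (Fin n) × Finset (Fin n) := fun P =>
    (Finset.univ.filter (fun i => P' i = none ∧ P i = true),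
     Finset.univ.filter (fun i => P' i ≠ none ∧ P' i ≠ some (f (P i)))) with hF
  set G : Finset (Fin n) × Finset (Fin n) → (Fin n → Bool) := fun sd i =>
    match P' i with
    | none => decide (i ∈ sd.1)
    | some c => if i ∈ sd.2 then !(f c) else f c with hG
  have hGF : ∀ P, G (F P) = P := by
    intro P
    funext i
    cases h : P' i with
    | none =>
        simp only [hG, hF, h, Finset.mem_filter, Finset.mem_univ, true_and]
        cases hp : P i <;> simp [h, hp]
    | some c =>
        simp only [hG, hF, h, Finset.mem_filter, Finset.mem_univ, true_and]
        by_cases hp : P i = f c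
        · have hffc : f (f c) = c := hf c
          rw [if_neg (by simp [hp, hffc]), hp]
        · have h1 : f (P i) ≠ c := fun hc => hp (by rw [← hc, hf])
          have h2 : P i = !(f c) := by
            cases hpc : P i <;> cases hfc : f c <;> simp_all
          rw [if_pos ⟨by simp, fun hc => h1 (Eq.symm (Option.some.inj hc))⟩, h2]
  have hinj : Set.InjOn F ↑(Finset.univ.filter (fun P : Fin n → Bool =>
        0.9 * (n : ℝ) < ((Finset.univ.filter (fun i => P' i = some (f (P i)))).card : ℝ))) :=
    Function.LeftInverse.injective (g := G) hGF |>.injOn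
  have hmaps : ∀ P ∈ Finset.univ.filter (fun P : Fin n → Bool =>
        0.9 * (n : ℝ) < ((Finset.univ.filter (fun i => P' i = some (f (P i)))).card : ℝ)),
      F P ∈ S.powerset ×ˢ (T.powerset.filter (fun s => 10 * (s.card + k) < n)) := by
    intro P hP
    simp only [Finset.mem_filter, Finset.mem_univ, true_and] at hP
    have hA : (Finset.univ.filter (fun i => P' i = some (f (P i)))).card
        + (Finset.univ.filter (fun i => P' i ≠ none ∧ P' i ≠ some (f (P i)))).card = n - k := by
      have hsplit := Finset.card_filter_add_card_filter_not (s := T)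
        (p := fun i => P' i = some (f (P i)))
      have e1 : T.filter (fun i => P' i = some (f (P i)))
          = Finset.univ.filter (fun i => P' i = some (f (P i))) := by
        ext i
        simp only [hT, Finset.filter_filter, Finset.mem_filter, Finset.mem_univ, true_and, ne_eq]
        constructor
        · intro hh
          exact hh.2
        · intro hh
          exact ⟨by simp [hh], hh⟩
      have e2 : T.filter (fun i => ¬ P' i = some (f (P i)))
          = Finset.univ.filter (fun i => P' i ≠ none ∧ P' i ≠ some (f (P i))) := by
        ext i
        simp only [hT, Finset.filter_filter, Finset.mem_filter, Finset.mem_univ, true_and, ne_eq]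
      rw [e1, e2] at hsplit
      rw [hsplit, hTcard]
    refine Finset.mem_product.2 ⟨Finset.mem_powerset.2 ?_, Finset.mem_filter.2
      ⟨Finset.mem_powerset.2 ?_, ?_⟩⟩
    · intro i hi
      simp only [hF, hS, Finset.mem_filter, Finset.mem_univ, true_and] at hi ⊢
      exact hi.1
    · intro i hi
      simp only [hF, hT, Finset.mem_filter, Finset.mem_univ, true_and, ne_eq] at hi ⊢
      exact hi.1
    · -- card bound
      have hcast : ((Finset.univ.filter (fun i => P' i = some (f (P i)))).card : ℝ)
          + ((Finset.univ.filter (fun i => P' i ≠ none ∧ P' i ≠ some (f (P i)))).card : ℝ)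
          = (n : ℝ) - k := by
        have hkn : k ≤ n := by omega
        rw [← Nat.cast_add, hA, Nat.cast_sub hkn]
      have : (10 * ((Finset.univ.filter
          (fun i => P' i ≠ none ∧ P' i ≠ some (f (P i)))).card + k) : ℝ) < n := by
        push_cast
        nlinarith [hP, hcast]
      have hnat : 10 * ((Finset.univ.filter
          (fun i => P' i ≠ none ∧ P' i ≠ some (f (P i)))).card + k) < n := by
        exact_mod_cast this
      simpa [hF] using hnat
  calc (Finset.univ.filter (fun P : Fin n → Bool =>
        0.9 * (n : ℝ) < ((Finset.univ.filter (fun i => P' i = some (f (P i)))).card : ℝ))).card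
      ≤ (S.powerset ×ˢ (T.powerset.filter (fun s => 10 * (s.card + k) < n))).card :=
        Finset.card_le_card_of_injOn F hmaps hinj
    _ = 2 ^ k * (T.powerset.filter (fun s => 10 * (s.card + k) < n)).card := by
        rw [Finset.card_product, Finset.card_powerset, hkcard]


-- number of small subsets
lemma Dcard_le {n k m : ℕ} (T : Finset (Fin n)) (hT : T.card = n - k)
    (hm : ∀ j, 10 * (j + k) < n → j ≤ m) :
    (T.powerset.filter (fun s => 10 * (s.card + k) < n)).card
      ≤ ∑ j ∈ Finset.range (m + 1), (n - k).choose j := by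
  classical
  calc (T.powerset.filter (fun s => 10 * (s.card + k) < n)).card
      ≤ ((Finset.range (m + 1)).biUnion (fun j => T.powersetCard j)).card := by
        apply Finset.card_le_card
        intro s hs
        simp only [Finset.mem_filter, Finset.mem_powerset] at hs
        exact Finset.mem_biUnion.2 ⟨s.card, Finset.mem_range.2 (Nat.lt_succ_of_le (hm _ hs.2)),
          Finset.mem_powersetCard.2 ⟨hs.1, rfl⟩⟩
    _ ≤ ∑ j ∈ Finset.range (m + 1), (T.powersetCard j).card := Finset.card_biUnion_le
    _ = ∑ j ∈ Finset.range (m + 1), (n - k).choose j := by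
        simp [Finset.card_powersetCard, hT]

lemma choose_mono_le (t : ℕ) : ∀ m j, j ≤ m → 2 * m ≤ t → t.choose j ≤ t.choose m := by
  intro m
  induction m with
  | zero => intro j hj _; rw [Nat.le_zero.mp hj]
  | succ m ih =>
      intro j hj h2
      rcases Nat.lt_succ_iff_lt_or_eq.mp (Nat.lt_succ_of_le hj) with h | h
      · exact (ih j (by omega) (by omega)).trans
          (Nat.choose_le_succ_of_lt_half_left (by omega))
      · rw [h]

lemma sum_le_mul_choose (t m : ℕ) (h2 : 2 * m ≤ t) :
    ∑ j ∈ Finset.range (m + 1), t.choose j ≤ (m + 1) * t.choose m := by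
  calc ∑ j ∈ Finset.range (m + 1), t.choose j ≤ ∑ _j ∈ Finset.range (m + 1), t.choose m :=
        Finset.sum_le_sum (fun j hj => choose_mono_le t m j (by
          simpa [Nat.lt_succ_iff] using hj) h2)
    _ = (m + 1) * t.choose m := by simp [Finset.sum_const, Finset.card_range, mul_comm]

lemma sum_choose_nine (t m : ℕ) (hmt : m ≤ t) :
    (∑ j ∈ Finset.range (m + 1), t.choose j) * 9 ^ (t - m) ≤ 10 ^ t := by
  have h10 : ∑ j ∈ Finset.range (t + 1), 9 ^ (t - j) * t.choose j = 10 ^ t := by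
    have h := add_pow (1 : ℕ) 9 t
    norm_num at h
    exact h.symm
  calc (∑ j ∈ Finset.range (m + 1), t.choose j) * 9 ^ (t - m)
      = ∑ j ∈ Finset.range (m + 1), t.choose j * 9 ^ (t - m) := by rw [Finset.sum_mul]
    _ ≤ ∑ j ∈ Finset.range (m + 1), 9 ^ (t - j) * t.choose j := by
        apply Finset.sum_le_sum
        intro j hj
        rw [mul_comm]
        apply Nat.mul_le_mul_right
        exact Nat.pow_le_pow_right (by norm_num)
          (Nat.sub_le_sub_left (by simpa [Nat.lt_succ_iff] using hj) t)
    _ ≤ ∑ j ∈ Finset.range (t + 1), 9 ^ (t - j) * t.choose j := by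
        apply Finset.sum_le_sum_of_subset
        exact Finset.range_subset_range.2 (by omega)
    _ = 10 ^ t := h10


lemma rpow_mono_aux {a b c : ℝ} (ha : 0 < a) (hab : a ≤ b) (hbc : Real.exp 1 * b ≤ c) :
    a * Real.log (c / a) ≤ b * Real.log (c / b) := by
  have hb : 0 < b := lt_of_lt_of_le ha hab
  have hc : 0 < c := lt_of_lt_of_le (by positivity) hbc
  have hlog1 : 1 ≤ Real.log (c / b) := by
    rw [Real.le_log_iff_exp_le (by positivity)]
    rw [le_div_iff₀ hb]
    linarith [hbc]
  have hlog2 : Real.log (b / a) ≤ b / a - 1 := Real.log_le_sub_one_of_pos (by positivity)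
  have hsplit : Real.log (c / a) = Real.log (c / b) + Real.log (b / a) := by
    rw [← Real.log_mul (by positivity) (by positivity)]
    congr 1
    field_simp
  rw [hsplit, mul_add]
  have e1 : a * Real.log (b / a) ≤ b - a := by
    have := mul_le_mul_of_nonneg_left hlog2 ha.le
    calc a * Real.log (b / a) ≤ a * (b / a - 1) := this
      _ = b - a := by field_simp
  have e2 : b - a ≤ (b - a) * Real.log (c / b) := by
    nlinarith [hlog1, sub_nonneg.2 hab]
  nlinarith [e1, e2]

lemma choose_le_rpow (t m : ℕ) (μ : ℝ) (hm : (m : ℝ) ≤ μ) (hμ : 0 < μ) (hμt : μ ≤ (t : ℝ)) :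
    (t.choose m : ℝ) ≤ (Real.exp 1 * t / μ) ^ μ := by
  have ht : (0 : ℝ) < t := lt_of_lt_of_le hμ hμt
  have hbase : (0 : ℝ) < Real.exp 1 * t / μ := by positivity
  have hbase1 : (1 : ℝ) ≤ Real.exp 1 * t / μ := by
    rw [le_div_iff₀ hμ, one_mul]
    calc μ ≤ t := hμt
      _ = 1 * t := (one_mul _).symm
      _ ≤ Real.exp 1 * t := by
          apply mul_le_mul_of_nonneg_right _ ht.le
          linarith [Real.add_one_le_exp (1 : ℝ)]
  rcases Nat.eq_zero_or_pos m with hm0 | hm1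
  · subst hm0
    simp only [Nat.choose_zero_right, Nat.cast_one]
    calc (1 : ℝ) = (Real.exp 1 * t / μ) ^ (0 : ℝ) := (Real.rpow_zero _).symm
      _ ≤ (Real.exp 1 * t / μ) ^ μ := Real.rpow_le_rpow_of_exponent_le hbase1 hμ.le
  · have hmR : (0 : ℝ) < m := by exact_mod_cast hm1
    have step1 : (t.choose m : ℝ) ≤ (t : ℝ) ^ m / m.factorial := Nat.choose_le_pow_div m t
    have step2 : ((m : ℝ)) ^ m / m.factorial ≤ Real.exp m := Real.pow_div_factorial_le_exp (x := (m : ℝ)) (by positivity) m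
    have step3 : (t : ℝ) ^ m / m.factorial ≤ (Real.exp 1 * t / m) ^ m := by
      have hfact : (0 : ℝ) < m.factorial := by exact_mod_cast m.factorial_pos
      rw [div_pow, mul_pow, Real.exp_one_pow]
      rw [div_le_div_iff₀ hfact (by positivity)]
      have h1 : ((m : ℝ)) ^ m ≤ Real.exp m * m.factorial := by
        rw [div_le_iff₀ hfact] at step2
        linarith [step2]
      calc (t : ℝ) ^ m * (m : ℝ) ^ m ≤ (t : ℝ) ^ m * (Real.exp m * m.factorial) := by
            apply mul_le_mul_of_nonneg_left h1 (by positivity)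
        _ = Real.exp ↑m * (t : ℝ) ^ m * m.factorial := by ring
  -- now (exp 1 * t / m)^m ≤ (exp 1 * t / μ)^μ
    have step4 : ((Real.exp 1 * t / m) : ℝ) ^ (m : ℕ) ≤ (Real.exp 1 * t / μ) ^ μ := by
      have hc : Real.exp 1 * (m : ℝ) ≤ Real.exp 1 * t := by
        apply mul_le_mul_of_nonneg_left _ (Real.exp_pos 1).le
        exact le_trans hm hμt
      have hmono := rpow_mono_aux hmR hm (c := Real.exp 1 * t)
        (mul_le_mul_of_nonneg_left hμt (Real.exp_pos 1).le)
      have hbm : (0 : ℝ) < Real.exp 1 * t / m := by positivity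
      rw [← Real.rpow_natCast (Real.exp 1 * t / m) m, Real.rpow_def_of_pos hbm,
        Real.rpow_def_of_pos hbase]
      apply Real.exp_le_exp.2
      nlinarith [hmono]
    exact le_trans (step1.trans step3) step4

open Classical in
theorem approx_partition_count (n k : ℕ) (hn : 10 ≤ n) (hk : 10 * k ≤ n)
    (P' : Fin n → Option Bool)
    (hkcard : (Finset.univ.filter (fun i => P' i = none)).card = k) :
    (((Finset.univ.filter (fun P : Fin n → Bool =>
          0.9 * (n : ℝ) < ((Finset.univ.filter (fun i => P' i = some (P i))).card : ℝ)
          ∨ 0.9 * (n : ℝ) <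
              ((Finset.univ.filter (fun i => P' i = some (!P i))).card : ℝ))).card : ℝ)
        ≤ (2 : ℝ) ^ ((k : ℝ) + 1 + Real.logb 2 n +
            (0.1 * n - k) * Real.logb 2 (((n : ℝ) - k) * Real.exp 1 / (0.1 * n - k))))
    ∧ (((Finset.univ.filter (fun P : Fin n → Bool =>
          0.9 * (n : ℝ) < ((Finset.univ.filter (fun i => P' i = some (P i))).card : ℝ)
          ∨ 0.9 * (n : ℝ) <
              ((Finset.univ.filter (fun i => P' i = some (!P i))).card : ℝ))).card : ℝ)
        ≤ (2 : ℝ) ^ (0.477 * (n : ℝ))) := by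
  classical
  set m : ℕ := (n - 10 * k - 1) / 10 with hm
  set t : ℕ := n - k with ht
  set N : ℕ := ∑ j ∈ Finset.range (m + 1), t.choose j with hN
  have hTcard : (Finset.univ.filter fun i : Fin n => P' i ≠ none).card = n - k := by
    have hsp := Finset.card_filter_add_card_filter_not
      (s := (Finset.univ : Finset (Fin n))) (p := fun i => P' i = none)
    simp only [Finset.card_univ, Fintype.card_fin] at hsp
    have h2 : (Finset.univ.filter fun i : Fin n => ¬ P' i = none).card
        = (Finset.univ.filter fun i : Fin n => P' i ≠ none).card := rfl
    omega
  have hD : ((Finset.univ.filter fun i : Fin n => P' i ≠ none).powerset.filter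
      (fun s => 10 * (s.card + k) < n)).card ≤ N := by
    rw [hN, ht]
    exact Dcard_le _ hTcard (fun j hj => by omega)
  have master : (Finset.univ.filter (fun P : Fin n → Bool =>
          0.9 * (n : ℝ) < ((Finset.univ.filter (fun i => P' i = some (P i))).card : ℝ)
          ∨ 0.9 * (n : ℝ) <
              ((Finset.univ.filter (fun i => P' i = some (!P i))).card : ℝ))).card
      ≤ 2 ^ (k + 1) * N := by
    have h1 : (Finset.univ.filter (fun P : Fin n → Bool =>
        0.9 * (n : ℝ) < ((Finset.univ.filter (fun i => P' i = some (P i))).card : ℝ))).card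
        ≤ 2 ^ k * ((Finset.univ.filter (fun i : Fin n => P' i ≠ none)).powerset.filter
          (fun s => 10 * (s.card + k) < n)).card :=
      count_one n k hk P' hkcard id (fun b => rfl)
    have h2 : (Finset.univ.filter (fun P : Fin n → Bool =>
        0.9 * (n : ℝ) < ((Finset.univ.filter (fun i => P' i = some (!P i))).card : ℝ))).card
        ≤ 2 ^ k * ((Finset.univ.filter (fun i : Fin n => P' i ≠ none)).powerset.filter
          (fun s => 10 * (s.card + k) < n)).card :=
      count_one n k hk P' hkcard (fun b => !b) (fun b => Bool.not_not b)
    have hsub : (Finset.univ.filter (fun P : Fin n → Bool =>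
          0.9 * (n : ℝ) < ((Finset.univ.filter (fun i => P' i = some (P i))).card : ℝ)
          ∨ 0.9 * (n : ℝ) <
              ((Finset.univ.filter (fun i => P' i = some (!P i))).card : ℝ)))
        ⊆ (Finset.univ.filter (fun P : Fin n → Bool =>
          0.9 * (n : ℝ) < ((Finset.univ.filter (fun i => P' i = some (P i))).card : ℝ)))
          ∪ (Finset.univ.filter (fun P : Fin n → Bool =>
          0.9 * (n : ℝ) < ((Finset.univ.filter (fun i => P' i = some (!P i))).card : ℝ))) := by
      intro P hP
      simp only [Finset.mem_filter, Finset.mem_univ, true_and, Finset.mem_union] at hP ⊢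
      exact hP
    calc (Finset.univ.filter (fun P : Fin n → Bool =>
          0.9 * (n : ℝ) < ((Finset.univ.filter (fun i => P' i = some (P i))).card : ℝ)
          ∨ 0.9 * (n : ℝ) <
              ((Finset.univ.filter (fun i => P' i = some (!P i))).card : ℝ))).card
        ≤ ((Finset.univ.filter (fun P : Fin n → Bool =>
          0.9 * (n : ℝ) < ((Finset.univ.filter (fun i => P' i = some (P i))).card : ℝ)))
          ∪ (Finset.univ.filter (fun P : Fin n → Bool =>
          0.9 * (n : ℝ) < ((Finset.univ.filter
            (fun i => P' i = some (!P i))).card : ℝ)))).card := Finset.card_le_card hsub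
      _ ≤ _ + _ := Finset.card_union_le _ _
      _ ≤ 2 ^ k * N + 2 ^ k * N := add_le_add (h1.trans (Nat.mul_le_mul_left _ hD))
            (h2.trans (Nat.mul_le_mul_left _ hD))
      _ = 2 ^ (k + 1) * N := by ring
  have castcard : ((Finset.univ.filter (fun P : Fin n → Bool =>
          0.9 * (n : ℝ) < ((Finset.univ.filter (fun i => P' i = some (P i))).card : ℝ)
          ∨ 0.9 * (n : ℝ) <
              ((Finset.univ.filter (fun i => P' i = some (!P i))).card : ℝ))).card : ℝ)
      ≤ ((2 ^ (k + 1) * N : ℕ) : ℝ) := Nat.cast_le.2 master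
  clear master
  have hnR : (10 : ℝ) ≤ (n : ℝ) := by exact_mod_cast hn
  constructor
  · -- first bound
    rcases Nat.lt_or_ge (10 * k) n with hlt | hge
    · set μ : ℝ := 0.1 * (n : ℝ) - (k : ℝ) with hμdef
      have hltR : 10 * (k : ℝ) < (n : ℝ) := by exact_mod_cast hlt
      have hμ : 0 < μ := by rw [hμdef]; norm_num; linarith
      have htc : ((t : ℕ) : ℝ) = (n : ℝ) - (k : ℝ) := by
        rw [ht]; exact Nat.cast_sub (by omega)
      have hmnat : 10 * m + 10 * k + 1 ≤ n := by omega
      have hmR : (m : ℝ) ≤ μ := by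
        have : (10 * m + 10 * k + 1 : ℝ) ≤ (n : ℝ) := by exact_mod_cast hmnat
        rw [hμdef]; push_cast at this ⊢; linarith
      have hμt : μ ≤ ((t : ℕ) : ℝ) := by
        rw [htc, hμdef]
        have hk0 : (0:ℝ) ≤ (k : ℝ) := by positivity
        linarith
      have hchoose := choose_le_rpow t m μ hmR hμ hμt
      have ht0 : (0 : ℝ) < ((t : ℕ) : ℝ) := lt_of_lt_of_le hμ hμt
      have hx : (0 : ℝ) < Real.exp 1 * ((t : ℕ) : ℝ) / μ := by positivity
      have harg : ((n : ℝ) - (k : ℝ)) * Real.exp 1 / μ = Real.exp 1 * ((t : ℕ) : ℝ) / μ := by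
        rw [htc]; ring
      rw [harg]
      have hsplit : (2 : ℝ) ^ ((k : ℝ) + 1 + Real.logb 2 (n : ℝ)
            + μ * Real.logb 2 (Real.exp 1 * ((t : ℕ) : ℝ) / μ))
          = ((2 ^ (k + 1) : ℕ) : ℝ) * ((n : ℝ) * (Real.exp 1 * ((t : ℕ) : ℝ) / μ) ^ μ) := by
        rw [Real.rpow_add two_pos, Real.rpow_add two_pos,
          Real.rpow_logb two_pos (by norm_num) (by linarith),
          mul_comm μ (Real.logb 2 _), Real.rpow_mul (by norm_num : (0:ℝ) ≤ 2),
          Real.rpow_logb two_pos (by norm_num) hx]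
        have hk1 : (2 : ℝ) ^ ((k : ℝ) + 1) = ((2 ^ (k + 1) : ℕ) : ℝ) := by
          have : ((k : ℝ) + 1) = ((k + 1 : ℕ) : ℝ) := by push_cast; ring
          rw [this, Real.rpow_natCast]; push_cast; ring
        rw [hk1]; ring
      rw [hsplit]
      have hmid : ((2 ^ (k + 1) * (N : ℕ) : ℕ) : ℝ)
          ≤ ((2 ^ (k + 1) : ℕ) : ℝ) * ((n : ℝ) * (Real.exp 1 * ((t : ℕ) : ℝ) / μ) ^ μ) := by
        have hNle : N ≤ (m + 1) * t.choose m := by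
          rw [hN]; exact sum_le_mul_choose t m (by omega)
        have hm1n : ((m : ℝ) + 1) ≤ (n : ℝ) := by
          have : m + 1 ≤ n := by omega
          exact_mod_cast this
        push_cast
        have h1 : ((N : ℕ) : ℝ) ≤ ((m : ℝ) + 1) * (t.choose m : ℝ) := by exact_mod_cast hNle
        have h2 : ((m : ℝ) + 1) * (t.choose m : ℝ)
            ≤ (n : ℝ) * (Real.exp 1 * ((t : ℕ) : ℝ) / μ) ^ μ := by
          apply mul_le_mul hm1n hchoose (by positivity) (by linarith)
        have h3 : (0:ℝ) ≤ (2:ℝ) ^ (k+1 : ℕ) := by positivity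
        calc (2:ℝ) ^ (k+1:ℕ) * ((N : ℕ) : ℝ) ≤ (2:ℝ) ^ (k+1:ℕ)
              * ((n : ℝ) * (Real.exp 1 * ((t : ℕ) : ℝ) / μ) ^ μ) := by
              exact mul_le_mul_of_nonneg_left (h1.trans h2) h3
          _ = _ := by push_cast; ring
      exact castcard.trans hmid
    · -- n = 10 k
      have hn10k : n = 10 * k := by omega
      have hnr : (n : ℝ) = 10 * (k : ℝ) := by exact_mod_cast hn10k
      have hz : 0.1 * (n : ℝ) - (k : ℝ) = 0 := by rw [hnr]; ring_nf
      rw [hz, zero_mul, add_zero]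
      have hsplit : (2 : ℝ) ^ ((k : ℝ) + 1 + Real.logb 2 (n : ℝ))
          = ((2 ^ (k + 1) : ℕ) : ℝ) * (n : ℝ) := by
        rw [Real.rpow_add two_pos, Real.rpow_logb two_pos (by norm_num) (by linarith)]
        have hk1 : (2 : ℝ) ^ ((k : ℝ) + 1) = ((2 ^ (k + 1) : ℕ) : ℝ) := by
          have : ((k : ℝ) + 1) = ((k + 1 : ℕ) : ℝ) := by push_cast; ring
          rw [this, Real.rpow_natCast]; push_cast; ring
        rw [hk1]
      rw [hsplit]
      have hm0 : m = 0 := by omega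
      have hN1 : N = 1 := by rw [hN, hm0]; simp
      refine castcard.trans ?_
      rw [hN1]
      push_cast
      have h2p : (0:ℝ) ≤ (2:ℝ) ^ (k+1) := by positivity
      nlinarith [h2p, hnR]
  · -- second bound
    rcases le_or_gt n 90 with hsmall | hlarge
    · have hsc := small_check n (by omega) k (by omega) hn hk
      rw [sc_eq] at hsc
      rw [← hm, ← ht, ← hN] at hsc
      have hle : ((2 ^ (k + 1) * N : ℕ) : ℝ) ≤ ((2 ^ (477 * n / 1000) : ℕ) : ℝ) :=
        Nat.cast_le.2 hsc
      have hc477 : ((477 * n / 1000 : ℕ) : ℝ) ≤ 0.477 * (n : ℝ) := by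
        have h1 : (477 * n / 1000) * 1000 ≤ 477 * n := Nat.div_mul_le_self _ _
        have h2 : ((477 * n / 1000 : ℕ) : ℝ) * 1000 ≤ 477 * (n : ℝ) := by exact_mod_cast h1
        norm_num
        linarith
      have hrw : ((2 ^ (477 * n / 1000 : ℕ) : ℕ) : ℝ)
          = (2 : ℝ) ^ (((477 * n / 1000 : ℕ) : ℝ)) := by
        rw [Real.rpow_natCast]; push_cast; ring
      refine castcard.trans (hle.trans ?_)
      rw [hrw]
      exact Real.rpow_le_rpow_of_exponent_le (by norm_num) hc477
    · -- n ≥ 91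
      have hNb : N * 9 ^ (t - m) ≤ 10 ^ t := by
        rw [hN]; exact sum_choose_nine t m (by omega)
      have h1 : (10 : ℕ) ^ 2000 ≤ 2 ^ 6644 := by decide +kernel
      have h2 : (10 : ℕ) ^ 2000 ≤ 9 ^ 2000 * 2 ^ 305 := by decide +kernel
      have h3 : N ^ 2000 * 9 ^ ((t - m) * 2000) ≤ 10 ^ (t * 2000) := by
        calc N ^ 2000 * 9 ^ ((t - m) * 2000) = (N * 9 ^ (t - m)) ^ 2000 := by
              rw [mul_pow, ← pow_mul]
          _ ≤ (10 ^ t) ^ 2000 := Nat.pow_le_pow_left hNb 2000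
          _ = 10 ^ (t * 2000) := by rw [← pow_mul]
      have h4 : (10 : ℕ) ^ (t * 2000) = 10 ^ (m * 2000) * 10 ^ ((t - m) * 2000) := by
        have he : t * 2000 = m * 2000 + (t - m) * 2000 := by omega
        rw [he, pow_add]
      have h5 : (10 : ℕ) ^ (m * 2000) ≤ 2 ^ (m * 6644) := by
        calc (10:ℕ) ^ (m * 2000) = (10 ^ 2000) ^ m := by rw [← pow_mul, mul_comm]
          _ ≤ (2 ^ 6644) ^ m := Nat.pow_le_pow_left h1 m
          _ = 2 ^ (m * 6644) := by rw [← pow_mul, mul_comm]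
      have h6 : (10 : ℕ) ^ ((t - m) * 2000) ≤ 9 ^ ((t - m) * 2000) * 2 ^ ((t - m) * 305) := by
        calc (10:ℕ) ^ ((t - m) * 2000) = (10 ^ 2000) ^ (t - m) := by rw [← pow_mul, mul_comm]
          _ ≤ (9 ^ 2000 * 2 ^ 305) ^ (t - m) := Nat.pow_le_pow_left h2 _
          _ = 9 ^ ((t - m) * 2000) * 2 ^ ((t - m) * 305) := by
              rw [mul_pow, ← pow_mul, ← pow_mul, mul_comm 2000 _, mul_comm 305 _]
      have h7 : N ^ 2000 * 9 ^ ((t - m) * 2000)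
          ≤ 2 ^ (m * 6644 + (t - m) * 305) * 9 ^ ((t - m) * 2000) := by
        refine h3.trans ?_
        rw [h4]
        calc (10:ℕ) ^ (m * 2000) * 10 ^ ((t - m) * 2000)
            ≤ 2 ^ (m * 6644) * (9 ^ ((t - m) * 2000) * 2 ^ ((t - m) * 305)) :=
              Nat.mul_le_mul h5 h6
          _ = 2 ^ (m * 6644 + (t - m) * 305) * 9 ^ ((t - m) * 2000) := by
              rw [pow_add]; ring
      have h8 : N ^ 2000 ≤ 2 ^ (m * 6644 + (t - m) * 305) :=
        Nat.le_of_mul_le_mul_right h7 (pow_pos (by norm_num) _)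
      have key2 : (2 ^ (k + 1) * N) ^ 2000 ≤ 2 ^ (954 * n) := by
        calc (2 ^ (k + 1) * N) ^ 2000 = 2 ^ ((k + 1) * 2000) * N ^ 2000 := by
              rw [mul_pow, ← pow_mul]
          _ ≤ 2 ^ ((k + 1) * 2000) * 2 ^ (m * 6644 + (t - m) * 305) :=
              Nat.mul_le_mul_left _ h8
          _ = 2 ^ ((k + 1) * 2000 + (m * 6644 + (t - m) * 305)) := by rw [← pow_add]
          _ ≤ 2 ^ (954 * n) := Nat.pow_le_pow_right (by norm_num) (by omega)
      have hr : ((2 : ℝ) ^ (0.477 * (n : ℝ))) ^ (2000 : ℕ) = ((2 ^ (954 * n) : ℕ) : ℝ) := by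
        rw [← Real.rpow_natCast ((2:ℝ) ^ (0.477 * (n : ℝ))) 2000,
          ← Real.rpow_mul (by norm_num)]
        have he : 0.477 * (n : ℝ) * ((2000 : ℕ) : ℝ) = ((954 * n : ℕ) : ℝ) := by
          push_cast; ring_nf
        rw [he, Real.rpow_natCast]
        push_cast; ring
      have hpow : (((2 ^ (k + 1) * N : ℕ)) : ℝ) ^ (2000 : ℕ)
          ≤ ((2 : ℝ) ^ (0.477 * (n : ℝ))) ^ (2000 : ℕ) := by
        rw [hr]
        exact_mod_cast key2
      have hfin : (((2 ^ (k + 1) * N : ℕ)) : ℝ) ≤ (2 : ℝ) ^ (0.477 * (n : ℝ)) :=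
        le_of_pow_le_pow_left₀ (by norm_num) (by positivity) hpow
      exact castcard.trans hfin
end

section
/- Sample P ∈ {0,1}ⁿ uniformly (n even) and a graph G where each pair is an edge independently with probability 1/2 + ρ if endpoints agree under P and 1/2 − ρ otherwise, with ρ = 100ε and ε ∈ (ω(√(log n/n)), 0.001). Then with probability ≥ 1 − n^{−Ω(1)}, there exists a bisection P' ∈ {0,1}ⁿ with |P'| = n/2 such that cut_G(P') ≤ cut_G(P) + 0.001εn²; in particular the minimum bisection size of G is at most cut_G(P) + 0.001εn². -/
open Finset

-- Unordered pairs of distinct vertices, encoded as ordered pairs `(u,v)` with `u < v`.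
abbrev PairIdx (n : ℕ) := {p : Fin n × Fin n // p.1 < p.2}

-- Correlation clustering cost of the clustering given by the labelling `c`
-- on the graph `g`: the number of non-edges inside clusters plus edges across clusters.
open Classical in
noncomputable def ccCost {n : ℕ} {L : Type*} (g : PairIdx n → Bool) (c : Fin n → L) : ℝ :=
  ∑ p : PairIdx n, if ((g p = true) ↔ (c p.val.1 = c p.val.2)) then 0 else 1

-- Density of the planted-partition distribution: `P ∈ {0,1}ⁿ` uniform, then each
-- pair is an edge independently with probability `1/2 + ρ` if the endpoints agree
-- under `P` and `1/2 − ρ` otherwise.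
open Classical in
noncomputable def plantedDensity (n : ℕ) (ρ : ℝ) (P : Fin n → Bool)
    (g : PairIdx n → Bool) : ℝ :=
  ((2 : ℝ) ^ n)⁻¹ * ∏ p : PairIdx n,
    (if ((g p = true) ↔ (P p.val.1 = P p.val.2)) then 1/2 + ρ else 1/2 - ρ)

-- Cut size of the partition `P` in the graph `g`.
open Classical in
noncomputable def cutSize {n : ℕ} (g : PairIdx n → Bool) (P : Fin n → Bool) : ℝ :=
  ∑ p : PairIdx n, if (g p = true ∧ P p.val.1 ≠ P p.val.2) then 1 else 0

-- Let `ρ = 100ε` with `ε ∈ (ω(√(log n / n)), 0.001)`, `n` even, and sample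
-- `(P, G)` from the planted-partition distribution.  With probability
-- `≥ 1 − n^{−Ω(1)}`, there exists a bisection `P'` (with `|P'| = n/2`) such that
-- `cut_G(P') ≤ cut_G(P) + 0.001 ε n²`; in particular the minimum bisection size
-- of `G` is at most `cut_G(P) + 0.001 ε n²`.
-- 1. sum-prod exchange
lemma sum_prod_bool {ι : Type*} [Fintype ι] [DecidableEq ι] (f : ι → Bool → ℝ) :
    ∑ g : ι → Bool, ∏ i, f i (g i) = ∏ i, (f i true + f i false) := by
  have := Finset.prod_univ_sum (t := fun _ : ι => (univ : Finset Bool)) (f := f)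
  rw [Fintype.piFinset_univ] at this
  rw [← this]
  congr 1
  ext i
  exact Fintype.sum_bool (f i)

-- 2. pair counting
open Classical in
lemma card_pairs_touch {n : ℕ} (D : Finset (Fin n)) :
    ((univ : Finset (PairIdx n)).filter (fun p => p.val.1 ∈ D ∨ p.val.2 ∈ D)).card ≤ D.card * n := by
  have h := Finset.card_le_card_of_injOn
    (f := fun p : PairIdx n => if p.val.1 ∈ D then p.val else p.val.swap)
    (s := (univ : Finset (PairIdx n)).filter (fun p => p.val.1 ∈ D ∨ p.val.2 ∈ D))
    (t := D ×ˢ (univ : Finset (Fin n)))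
    (by
      intro p hp
      simp only [mem_coe, mem_filter] at hp
      dsimp only
      split_ifs with h1
      · simp [h1]
      · simp [Prod.swap, hp.2.resolve_left h1])
    (by
      intro p hp q hq h
      apply Subtype.ext
      dsimp only at h
      split_ifs at h with h1 h2 h2
      · exact h
      · exfalso
        have := p.prop
        rw [h] at this
        exact absurd q.prop (by simp [Prod.lt_iff] at this ⊢; omega)
      · exfalso
        have := q.prop
        rw [← h] at this
        exact absurd p.prop (by simp [Prod.lt_iff] at this ⊢; omega)
      · exact Prod.swap_injective h)
  simpa [Finset.card_product] using h

-- 3. flip construction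
open Classical in
lemma exists_flip (n m : ℕ) (hmn : m ≤ n) (P : Fin n → Bool) :
    ∃ P' : Fin n → Bool,
      (univ.filter fun i => P' i = true).card = m ∧
      (((univ.filter fun i => ¬ P' i = P i).card : ℝ)) ≤
        |(((univ.filter fun i => P i = true).card : ℝ)) - m| := by
  classical
  set A := univ.filter fun i => P i = true with hA
  by_cases h : m ≤ A.card
  · obtain ⟨B, hBA, hBcard⟩ := Finset.exists_subset_card_eq h
    refine ⟨fun i => decide (i ∈ B), ?_, ?_⟩
    · rw [show (univ.filter fun i => decide (i ∈ B) = true) = B by ext i; simp]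
      exact hBcard
    · have hdiff : (univ.filter fun i => ¬ (decide (i ∈ B)) = P i) = A \ B := by
        ext i
        simp only [mem_filter, mem_univ, true_and, mem_sdiff, hA]
        by_cases hiB : i ∈ B
        · have : P i = true := (mem_filter.mp (hBA hiB)).2
          simp [hiB, this]
        · cases hPi : P i <;> simp [hiB, hPi]
      rw [hdiff, Finset.card_sdiff_of_subset hBA, hBcard]
      have hc : (m:ℝ) ≤ A.card := Nat.cast_le.mpr h
      rw [abs_of_nonneg (by linarith)]
      push_cast [Nat.cast_sub h]
      linarith
  · push_neg at h
    obtain ⟨B, hAB, hBcard⟩ := Finset.exists_superset_card_eq h.le (by simpa using hmn)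
    refine ⟨fun i => decide (i ∈ B), ?_, ?_⟩
    · rw [show (univ.filter fun i => decide (i ∈ B) = true) = B by ext i; simp]
      exact hBcard
    · have hdiff : (univ.filter fun i => ¬ (decide (i ∈ B)) = P i) = B \ A := by
        ext i
        simp only [mem_filter, mem_univ, true_and, mem_sdiff, hA]
        by_cases hiA : i ∈ A
        · have hPi : P i = true := (mem_filter.mp hiA).2
          have : i ∈ B := hAB hiA
          simp [this, hPi, hiA]
        · have hPi : P i = false := by
            have := hiA
            simp only [hA, mem_filter, mem_univ, true_and] at this
            simpa using this
          cases hiB : decide (i ∈ B) <;> simp_all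
      rw [hdiff, Finset.card_sdiff_of_subset hAB, hBcard]
      have hc : (A.card:ℝ) < m := Nat.cast_lt.mpr h
      rw [abs_of_nonpos (by linarith)]
      push_cast [Nat.cast_sub h.le]
      linarith

-- 4. cut flip bound
open Classical in
lemma cut_flip_bound {n : ℕ} (g : PairIdx n → Bool) (P P' : Fin n → Bool) :
    cutSize g P' ≤ cutSize g P + ((univ.filter fun i => ¬ P' i = P i).card : ℝ) * n := by
  classical
  set D := univ.filter fun i => ¬ P' i = P i with hD
  have key : cutSize g P' ≤ cutSize g P +
      ∑ p : PairIdx n, (if p.val.1 ∈ D ∨ p.val.2 ∈ D then (1:ℝ) else 0) := by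
    unfold cutSize
    rw [← Finset.sum_add_distrib]
    apply Finset.sum_le_sum
    intro p _
    by_cases hp : p.val.1 ∈ D ∨ p.val.2 ∈ D
    · rw [if_pos hp]
      split_ifs <;> norm_num
    · push_neg at hp
      have h1 : P' p.val.1 = P p.val.1 := by
        have := hp.1; simp only [hD, mem_filter, mem_univ, true_and, not_not] at this; exact this
      have h2 : P' p.val.2 = P p.val.2 := by
        have := hp.2; simp only [hD, mem_filter, mem_univ, true_and, not_not] at this; exact this
      simp only [h1, h2, if_neg (show ¬((p.val.1 ∈ D) ∨ (p.val.2 ∈ D)) by push_neg; exact hp), add_zero]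
      exact le_refl _
  refine key.trans ?_
  gcongr
  rw [Finset.sum_boole]
  exact_mod_cast card_pairs_touch D

-- upper tail bound
open Classical in
lemma tail_up (n m : ℕ) (hm : n = 2 * m) (hn : 2 ≤ n) :
    ((univ.filter (fun P : Fin n → Bool =>
        (m : ℝ) + Real.sqrt (n * Real.log n) < ((univ.filter fun i => P i = true).card : ℝ))).card : ℝ)
      ≤ 2 ^ n / n ^ 2 := by
  classical
  have hn0 : (0:ℝ) < n := by positivity
  have hn1 : (1:ℝ) < n := by exact_mod_cast hn
  have hL : 0 < Real.log n := Real.log_pos hn1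
  set L := Real.log n with hLdef
  set t := Real.sqrt (n * L) with htdef
  have ht0 : 0 ≤ t := Real.sqrt_nonneg _
  have hsq : t ^ 2 = n * L := Real.sq_sqrt (by positivity)
  set l := 2 * t / n with hldef
  have hl0 : 0 ≤ l := by positivity
  set a : (Fin n → Bool) → ℕ := fun P => (univ.filter fun i => P i = true).card with hadef
  have hsigma : ∀ P : Fin n → Bool,
      ∑ i, (if P i = true then (1:ℝ) else -1) = 2 * (a P) - n := by
    intro P
    have h1 : ∀ i : Fin n, (if P i = true then (1:ℝ) else -1)
        = 2 * (if P i = true then (1:ℝ) else 0) - 1 := by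
      intro i; split <;> ring
    simp_rw [h1]
    rw [Finset.sum_sub_distrib, ← Finset.mul_sum, Finset.sum_boole, Finset.sum_const,
      card_univ, Fintype.card_fin]
    simp [hadef]
  have hexpand : ∀ P : Fin n → Bool,
      Real.exp (l * (2 * (a P) - n)) = ∏ i, Real.exp (l * (if P i = true then (1:ℝ) else -1)) := by
    intro P
    rw [← Real.exp_sum, ← Finset.mul_sum, hsigma P]
  set bad := univ.filter (fun P : Fin n → Bool => (m : ℝ) + t < (a P : ℝ)) with hbad
  have step1 : (bad.card : ℝ) ≤ ∑ P ∈ bad, Real.exp (l * (2 * (a P) - n) - 2 * l * t) := by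
    rw [Finset.card_eq_sum_ones bad]
    push_cast
    apply Finset.sum_le_sum
    intro P hP
    apply Real.one_le_exp
    simp only [hbad, mem_filter, mem_univ, true_and] at hP
    have : 2 * t < 2 * (a P) - n := by
      have : (n:ℝ) = 2 * m := by exact_mod_cast hm
      linarith
    nlinarith
  have step2 : ∑ P ∈ bad, Real.exp (l * (2 * (a P) - n) - 2 * l * t)
      ≤ ∑ P : Fin n → Bool, Real.exp (l * (2 * (a P) - n) - 2 * l * t) :=
    Finset.sum_le_sum_of_subset_of_nonneg (Finset.subset_univ _)
      (fun _ _ _ => le_of_lt (Real.exp_pos _))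
  have step3 : ∑ P : Fin n → Bool, Real.exp (l * (2 * (a P) - n) - 2 * l * t)
      = Real.exp (-(2 * l * t)) * (Real.exp l + Real.exp (-l)) ^ n := by
    have : ∀ P : Fin n → Bool, Real.exp (l * (2 * (a P) - n) - 2 * l * t)
        = Real.exp (-(2 * l * t)) * ∏ i, Real.exp (l * (if P i = true then (1:ℝ) else -1)) := by
      intro P
      rw [← hexpand P, ← Real.exp_add]
      ring_nf
    simp_rw [this]
    rw [← Finset.mul_sum]
    congr 1
    rw [sum_prod_bool (fun (_ : Fin n) b => Real.exp (l * (if b = true then (1:ℝ) else -1)))]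
    norm_num
  have step4 : (Real.exp l + Real.exp (-l)) ^ n ≤ (2 * Real.exp (l ^ 2 / 2)) ^ n := by
    apply pow_le_pow_left₀ (by positivity)
    have h := Real.cosh_le_exp_half_sq l
    rw [Real.cosh_eq] at h
    linarith
  have hlt : 2 * l * t = 4 * L := by
    rw [hldef]
    field_simp
    nlinarith [hsq]
  have hll : l ^ 2 = 4 * L / n := by
    rw [hldef]
    field_simp
    nlinarith [hsq]
  have step5 : Real.exp (-(2 * l * t)) * (2 * Real.exp (l ^ 2 / 2)) ^ n
      = 2 ^ n * Real.exp (-(2 * L)) := by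
    rw [mul_pow, ← Real.exp_nat_mul, hlt, hll]
    rw [show Real.exp (-(4*L)) * (2^n * Real.exp (n * (4*L/n/2)))
        = 2^n * (Real.exp (-(4*L)) * Real.exp (n*(4*L/n/2))) by ring, ← Real.exp_add]
    congr 1
    field_simp
    ring
  have hfin : Real.exp (-(2 * L)) = (n:ℝ)⁻¹ * (n:ℝ)⁻¹ := by
    rw [show -(2*L) = -L + -L by ring, Real.exp_add, Real.exp_neg, Real.exp_log hn0]
  calc (bad.card : ℝ) ≤ Real.exp (-(2 * l * t)) * (Real.exp l + Real.exp (-l)) ^ n :=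
        (step1.trans step2).trans_eq step3
    _ ≤ Real.exp (-(2 * l * t)) * (2 * Real.exp (l ^ 2 / 2)) ^ n := by
        have := Real.exp_pos (-(2*l*t)); nlinarith [step4]
    _ = 2 ^ n * Real.exp (-(2 * L)) := step5
    _ = 2 ^ n / n ^ 2 := by rw [hfin]; field_simp

-- lower tail ≤ upper tail
open Classical in
lemma tail_low_le (n m : ℕ) (hm : n = 2 * m) (t : ℝ) :
    (univ.filter (fun P : Fin n → Bool =>
        ((univ.filter fun i => P i = true).card : ℝ) + t < m)).card
    ≤ (univ.filter (fun P : Fin n → Bool =>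
        (m : ℝ) + t < ((univ.filter fun i => P i = true).card : ℝ))).card := by
  classical
  apply Finset.card_le_card_of_injOn (fun P => fun i => !(P i))
  · intro P hP
    simp only [mem_coe, mem_filter, mem_univ, true_and] at hP ⊢
    have hset : (univ.filter fun i => (!(P i)) = true) = (univ.filter fun i => P i = true)ᶜ := by
      ext i; simp
    have hle : (univ.filter fun i => P i = true).card ≤ n := by
      refine le_trans (Finset.card_filter_le _ _) ?_
      simp
    rw [hset, Finset.card_compl, Fintype.card_fin]
    have hcast : ((n - (univ.filter fun i => P i = true).card : ℕ) : ℝ)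
        = (n : ℝ) - (univ.filter fun i => P i = true).card := by
      push_cast [Nat.cast_sub hle]; ring
    rw [hcast]
    have hnm : (n:ℝ) = 2 * m := by exact_mod_cast hm
    linarith
  · intro P _ Q _ h
    funext i
    have := congrFun h i
    simpa using this

open Classical in
theorem planted_bisection_upper (ε : ℕ → ℝ) (hub : ∀ n, ε n < 0.001)
    (hlb : Filter.Tendsto (fun n => ε n * Real.sqrt ((n : ℝ) / Real.log n))
      Filter.atTop Filter.atTop) :
    ∃ α : ℝ, 0 < α ∧ ∃ N : ℕ, ∀ n : ℕ, N ≤ n → Even n →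
      1 - (n : ℝ) ^ (-α) ≤
        ∑ P : Fin n → Bool, ∑ g : PairIdx n → Bool,
          plantedDensity n (100 * ε n) P g *
            (if ∃ P' : Fin n → Bool,
                (Finset.univ.filter (fun i => P' i = true)).card = n / 2 ∧
                cutSize g P' ≤ cutSize g P + 0.001 * ε n * (n : ℝ) ^ 2
             then 1 else 0) := by
  classical
  obtain ⟨N₀, hN₀⟩ := Filter.eventually_atTop.mp (hlb.eventually_ge_atTop 2000)
  refine ⟨1, one_pos, max N₀ 2, fun n hn hEven => ?_⟩
  have hN : N₀ ≤ n := le_trans (le_max_left _ _) hn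
  have hn2 : 2 ≤ n := le_trans (le_max_right _ _) hn
  obtain ⟨m, hm⟩ := hEven
  have hm2 : n = 2 * m := by omega
  have hn0 : (0:ℝ) < n := by
    have : 0 < n := by omega
    exact_mod_cast this
  have hn1 : (1:ℝ) < n := by exact_mod_cast hn2
  have hL : 0 < Real.log n := Real.log_pos hn1
  set t := Real.sqrt (n * Real.log n) with htdef
  have ht0 : 0 ≤ t := Real.sqrt_nonneg _
  have hε := hN₀ n hN
  set S2 := Real.sqrt ((n:ℝ) / Real.log n) with hS2
  have hS2pos : 0 < S2 := Real.sqrt_pos.mpr (by positivity)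
  have hεpos : 0 < ε n := by nlinarith [hS2pos]
  have hkey : t * S2 ≤ 2 * n := by
    rw [htdef, hS2, ← Real.sqrt_mul (by positivity)]
    have harg : (n:ℝ) * Real.log n * ((n:ℝ)/Real.log n) = (n:ℝ)^2 := by
      field_simp
    rw [harg, Real.sqrt_sq hn0.le]
    linarith
  have htc : t * n ≤ 0.001 * ε n * (n:ℝ)^2 := by
    have h1 : t * n * S2 ≤ 2*n*n := by nlinarith [hkey, ht0]
    have h2 : 2*(n:ℝ)*n ≤ 0.001 * ε n * (n:ℝ)^2 * S2 := by
      nlinarith [mul_le_mul_of_nonneg_left hε (show (0:ℝ) ≤ 0.001*(n:ℝ)^2 by positivity)]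
    exact le_of_mul_le_mul_right (h1.trans h2) hS2pos
  have hρub : 100 * ε n ≤ 1/2 := by have := hub n; linarith
  have hdens : ∀ (P : Fin n → Bool) (g : PairIdx n → Bool),
      0 ≤ plantedDensity n (100 * ε n) P g := by
    intro P g
    unfold plantedDensity
    apply mul_nonneg (by positivity)
    apply Finset.prod_nonneg
    intro p _
    split <;> linarith
  set a : (Fin n → Bool) → ℕ := fun P => (univ.filter fun i => P i = true).card with hadef
  have hind : ∀ P : Fin n → Bool, |((a P:ℝ)) - m| ≤ t → ∀ g : PairIdx n → Bool,
      (∃ P' : Fin n → Bool, (Finset.univ.filter (fun i => P' i = true)).card = n / 2 ∧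
        cutSize g P' ≤ cutSize g P + 0.001 * ε n * (n:ℝ)^2) := by
    intro P hP g
    obtain ⟨P', hP'card, hP'flip⟩ := exists_flip n m (by omega) P
    refine ⟨P', by rw [hP'card]; omega, ?_⟩
    have hc := cut_flip_bound g P P'
    have hflipn : ((univ.filter fun i => ¬ P' i = P i).card : ℝ) * n ≤ t * n :=
      mul_le_mul_of_nonneg_right (hP'flip.trans hP) hn0.le
    linarith
  have hmarg : ∀ P : Fin n → Bool,
      ∑ g : PairIdx n → Bool, plantedDensity n (100 * ε n) P g = ((2:ℝ)^n)⁻¹ := by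
    intro P
    unfold plantedDensity
    rw [← Finset.mul_sum]
    rw [sum_prod_bool (fun (p : PairIdx n) (b : Bool) =>
      if ((b = true) ↔ (P p.val.1 = P p.val.2)) then 1/2 + 100 * ε n else 1/2 - 100 * ε n)]
    have hone : ∀ p : PairIdx n,
        ((if (((true:Bool) = true) ↔ (P p.val.1 = P p.val.2)) then 1/2 + 100 * ε n else 1/2 - 100 * ε n)
        + (if (((false:Bool) = true) ↔ (P p.val.1 = P p.val.2)) then 1/2 + 100 * ε n else 1/2 - 100 * ε n)) = 1 := by
      intro p
      by_cases h : P p.val.1 = P p.val.2 <;> simp [h] <;> ring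
    rw [Finset.prod_congr rfl (fun p _ => hone p), Finset.prod_const_one, mul_one]
  set good := univ.filter (fun P : Fin n → Bool => |((a P:ℝ)) - m| ≤ t) with hgood
  have hbadcount : ((univ.filter (fun P : Fin n → Bool => ¬ |((a P:ℝ)) - m| ≤ t)).card : ℝ)
      ≤ 2 * (2^n / n^2) := by
    have hsubset : univ.filter (fun P : Fin n → Bool => ¬ |((a P:ℝ)) - m| ≤ t)
        ⊆ (univ.filter (fun P : Fin n → Bool => (m:ℝ) + t < (a P : ℝ)))
          ∪ (univ.filter (fun P : Fin n → Bool => (a P : ℝ) + t < m)) := by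
      intro P hP
      simp only [mem_filter, mem_univ, true_and, mem_union, not_le] at hP ⊢
      rcases lt_abs.mp hP with h | h
      · left; linarith
      · right; linarith
    have hc1 := Finset.card_le_card hsubset
    have hc2 := Finset.card_union_le
      (univ.filter (fun P : Fin n → Bool => (m:ℝ) + t < (a P : ℝ)))
      (univ.filter (fun P : Fin n → Bool => (a P : ℝ) + t < m))
    have h1 := tail_up n m hm2 hn2
    have h2 := tail_low_le n m hm2 t
    have h2' : ((univ.filter (fun P : Fin n → Bool => (a P : ℝ) + t < m)).card : ℝ)
        ≤ 2^n / n^2 := le_trans (by exact_mod_cast h2) h1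
    have hc1' : ((univ.filter (fun P : Fin n → Bool => ¬ |((a P:ℝ)) - m| ≤ t)).card : ℝ)
        ≤ ((univ.filter (fun P : Fin n → Bool => (m:ℝ) + t < (a P : ℝ))).card : ℝ)
          + ((univ.filter (fun P : Fin n → Bool => (a P : ℝ) + t < m)).card : ℝ) := by
      exact_mod_cast le_trans hc1 hc2
    linarith
  have hcardtot : good.card
      + (univ.filter (fun P : Fin n → Bool => ¬ |((a P:ℝ)) - m| ≤ t)).card = 2^n := by
    rw [hgood, Finset.card_filter_add_card_filter_not, card_univ]
    simp [Fintype.card_fun]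
  have hgoodcard : (2:ℝ)^n - 2 * (2^n / n^2) ≤ (good.card : ℝ) := by
    have : (good.card : ℝ)
        + ((univ.filter (fun P : Fin n → Bool => ¬ |((a P:ℝ)) - m| ≤ t)).card : ℝ) = 2^n := by
      exact_mod_cast hcardtot
    linarith
  have h2n : (0:ℝ) < 2^n := by positivity
  calc 1 - (n:ℝ)^(-(1:ℝ)) ≤ (good.card : ℝ) * ((2:ℝ)^n)⁻¹ := by
        rw [Real.rpow_neg_one]
        have heq : ((2:ℝ)^n - 2 * (2^n / n^2)) * ((2:ℝ)^n)⁻¹ = 1 - 2/(n:ℝ)^2 := by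
          field_simp
        have hmono : ((2:ℝ)^n - 2 * (2^n / n^2)) * ((2:ℝ)^n)⁻¹
            ≤ (good.card : ℝ) * ((2:ℝ)^n)⁻¹ := by
          apply mul_le_mul_of_nonneg_right hgoodcard (by positivity)
        rw [heq] at hmono
        refine le_trans ?_ hmono
        have : 2/(n:ℝ)^2 ≤ (n:ℝ)⁻¹ := by
          rw [div_le_iff₀ (by positivity)]
          have : (n:ℝ)⁻¹ * (n:ℝ)^2 = n := by field_simp
          rw [this]
          exact_mod_cast hn2
        linarith
    _ = ∑ _P ∈ good, ((2:ℝ)^n)⁻¹ := by rw [Finset.sum_const, nsmul_eq_mul]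
    _ = ∑ P ∈ good, ∑ g : PairIdx n → Bool,
          plantedDensity n (100 * ε n) P g *
            (if ∃ P' : Fin n → Bool,
                (Finset.univ.filter (fun i => P' i = true)).card = n / 2 ∧
                cutSize g P' ≤ cutSize g P + 0.001 * ε n * (n : ℝ) ^ 2
             then 1 else 0) := by
        apply Finset.sum_congr rfl
        intro P hP
        rw [hgood, mem_filter] at hP
        rw [← hmarg P]
        apply Finset.sum_congr rfl
        intro g _
        rw [if_pos (hind P hP.2 g), mul_one]
    _ ≤ ∑ P : Fin n → Bool, ∑ g : PairIdx n → Bool,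
          plantedDensity n (100 * ε n) P g *
            (if ∃ P' : Fin n → Bool,
                (Finset.univ.filter (fun i => P' i = true)).card = n / 2 ∧
                cutSize g P' ≤ cutSize g P + 0.001 * ε n * (n : ℝ) ^ 2
             then 1 else 0) := by
        apply Finset.sum_le_sum_of_subset_of_nonneg (Finset.subset_univ _)
        intro P _ _
        apply Finset.sum_nonneg
        intro g _
        apply mul_nonneg (hdens P g)
        split <;> norm_num
end
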